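/- With the Brenner construction F as above, F is fully faithful: every k⟨X,Y⟩-module homomorphism α : FM → FN is of the form Fβ (a diagonal block matrix diag(β,…,β)) for a unique A-module homomorphism β : M → N. -/

import Mathlib

section BrennerAux

variable {k P : Type} [Field k] [AddCommGroup P] [Module k P] {n : ℕ}

lemma brenner_aux_easy_y (y : Fin (n+2) → Fin (n+2) → (P →ₗ[k] P))
    (hlow : ∀ i j : Fin (n + 2), (j : ℕ) ≤ (i : ℕ) → y i j = 0)
    (Y : (Fin (n+2) → P) →ₗ[k] (Fin (n+2) → P))
    (hY : ∀ w i, Y w i = ∑ j, y i j (w j)) :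
    ∀ (p s : ℕ) (w : Fin (n+2) → P), (∀ i : Fin (n+2), s ≤ (i : ℕ) → w i = 0) →
      ∀ i : Fin (n+2), s ≤ (i : ℕ) + p → (Y ^ p) w i = 0 := by
  intro p
  induction p with
  | zero =>
    intro s w hw i hi
    simpa using hw i (by simpa using hi)
  | succ p ih =>
    intro s w hw i hi
    rw [pow_succ, Module.End.mul_apply]
    refine ih (s - 1) (Y w) ?_ i (by omega)
    intro j hj
    rw [hY]
    refine Finset.sum_eq_zero fun l _ => ?_
    by_cases hle : (l : ℕ) ≤ (j : ℕ)
    · rw [hlow j l hle]; simp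
    · rw [hw l (by omega)]; simp

lemma brenner_aux_hard_y (y : Fin (n+2) → Fin (n+2) → (P →ₗ[k] P))
    (hsup : ∀ i j : Fin (n + 2), (j : ℕ) = (i : ℕ) + 1 → y i j = LinearMap.id)
    (hlow : ∀ i j : Fin (n + 2), (j : ℕ) ≤ (i : ℕ) → y i j = 0)
    (Y : (Fin (n+2) → P) →ₗ[k] (Fin (n+2) → P))
    (hY : ∀ w i, Y w i = ∑ j, y i j (w j)) :
    ∀ (p : ℕ) (w : Fin (n+2) → P), (Y ^ p) w = 0 →
      ∀ i : Fin (n+2), p ≤ (i : ℕ) → w i = 0 := by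
  intro p
  induction p with
  | zero =>
    intro w hw i _
    simpa using congrFun hw i
  | succ p ih =>
    intro w hw i hi
    rw [pow_succ, Module.End.mul_apply] at hw
    have hYw : ∀ j : Fin (n+2), p ≤ (j : ℕ) → (Y w) j = 0 := ih (Y w) hw
    have key : ∀ d : ℕ, ∀ i : Fin (n+2), p + 1 ≤ (i : ℕ) → n + 2 - (i : ℕ) ≤ d → w i = 0 := by
      intro d
      induction d with
      | zero => intro i _ hd; omega
      | succ d ihd =>
        intro i hi hd
        have hi' : (i : ℕ) - 1 < n + 2 := by omega
        set i' : Fin (n+2) := ⟨(i : ℕ) - 1, hi'⟩ with hi'def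
        have hval : (i' : ℕ) = (i : ℕ) - 1 := rfl
        have h0 : (Y w) i' = w i := by
          rw [hY]
          rw [Finset.sum_eq_single i]
          · rw [hsup i' i (by omega)]; simp
          · intro l _ hl
            by_cases hle : (l : ℕ) ≤ (i' : ℕ)
            · rw [hlow i' l hle]; simp
            · have hne : (l : ℕ) ≠ (i : ℕ) := fun h => hl (Fin.ext h)
              rw [ihd l (by omega) (by omega)]; simp
          · intro h; exact absurd (Finset.mem_univ i) h
        rw [← h0]
        exact hYw i' (by omega)
    exact key (n + 2) i hi (by omega)

lemma brenner_aux_easy_x (x : Fin (n+2) → Fin (n+2) → (P →ₗ[k] P))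
    (hup : ∀ i j : Fin (n + 2), (i : ℕ) ≤ (j : ℕ) → x i j = 0)
    (X : (Fin (n+2) → P) →ₗ[k] (Fin (n+2) → P))
    (hX : ∀ w i, X w i = ∑ j, x i j (w j)) :
    ∀ (p s : ℕ) (w : Fin (n+2) → P), (∀ i : Fin (n+2), (i : ℕ) < s → w i = 0) →
      ∀ i : Fin (n+2), (i : ℕ) < s + p → (X ^ p) w i = 0 := by
  intro p
  induction p with
  | zero =>
    intro s w hw i hi
    simpa using hw i (by simpa using hi)
  | succ p ih =>
    intro s w hw i hi
    rw [pow_succ, Module.End.mul_apply]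
    refine ih (s + 1) (X w) ?_ i (by omega)
    intro j hj
    rw [hX]
    refine Finset.sum_eq_zero fun l _ => ?_
    by_cases hle : (j : ℕ) ≤ (l : ℕ)
    · rw [hup j l hle]; simp
    · rw [hw l (by omega)]; simp

lemma brenner_aux_hard_x (x : Fin (n+2) → Fin (n+2) → (P →ₗ[k] P))
    (hsub : ∀ i j : Fin (n + 2), (i : ℕ) = (j : ℕ) + 1 → x i j = LinearMap.id)
    (hup : ∀ i j : Fin (n + 2), (i : ℕ) ≤ (j : ℕ) → x i j = 0)
    (X : (Fin (n+2) → P) →ₗ[k] (Fin (n+2) → P))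
    (hX : ∀ w i, X w i = ∑ j, x i j (w j)) :
    ∀ (p : ℕ) (w : Fin (n+2) → P), (X ^ p) w = 0 →
      ∀ i : Fin (n+2), (i : ℕ) + p < n + 2 → w i = 0 := by
  intro p
  induction p with
  | zero =>
    intro w hw i _
    simpa using congrFun hw i
  | succ p ih =>
    intro w hw i hi
    rw [pow_succ, Module.End.mul_apply] at hw
    have hXw : ∀ j : Fin (n+2), (j : ℕ) + p < n + 2 → (X w) j = 0 := ih (X w) hw
    have key : ∀ d : ℕ, ∀ i : Fin (n+2), (i : ℕ) + p + 1 < n + 2 → (i : ℕ) ≤ d → w i = 0 := by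
      intro d
      induction d with
      | zero =>
        intro i hi hd
        have hi' : (i : ℕ) + 1 < n + 2 := by omega
        set i' : Fin (n+2) := ⟨(i : ℕ) + 1, hi'⟩ with hi'def
        have hval : (i' : ℕ) = (i : ℕ) + 1 := rfl
        have h0 : (X w) i' = w i := by
          rw [hX, Finset.sum_eq_single i]
          · rw [hsub i' i (by omega)]; simp
          · intro l _ hl
            by_cases hle : (i' : ℕ) ≤ (l : ℕ)
            · rw [hup i' l hle]; simp
            · have hne : (l : ℕ) ≠ (i : ℕ) := fun h => hl (Fin.ext h)
              omega
          · intro h; exact absurd (Finset.mem_univ i) h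
        rw [← h0]
        exact hXw i' (by omega)
      | succ d ihd =>
        intro i hi hd
        have hi' : (i : ℕ) + 1 < n + 2 := by omega
        set i' : Fin (n+2) := ⟨(i : ℕ) + 1, hi'⟩ with hi'def
        have hval : (i' : ℕ) = (i : ℕ) + 1 := rfl
        have h0 : (X w) i' = w i := by
          rw [hX, Finset.sum_eq_single i]
          · rw [hsub i' i (by omega)]; simp
          · intro l _ hl
            by_cases hle : (i' : ℕ) ≤ (l : ℕ)
            · rw [hup i' l hle]; simp
            · have hne : (l : ℕ) ≠ (i : ℕ) := fun h => hl (Fin.ext h)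
              rw [ihd l (by omega) (by omega)]; simp
          · intro h; exact absurd (Finset.mem_univ i) h
        rw [← h0]
        exact hXw i' (by omega)
    exact key (n + 2) i (by omega) (by omega)

lemma brenner_aux_pow_comm {Q R : Type} [AddCommGroup Q] [Module k Q]
    [AddCommGroup R] [Module k R]
    (A : Q →ₗ[k] R) (Y : Q →ₗ[k] Q) (Y' : R →ₗ[k] R)
    (h : ∀ v, A (Y v) = Y' (A v)) :
    ∀ (p : ℕ) (v : Q), A ((Y ^ p) v) = (Y' ^ p) (A v) := by
  intro p
  induction p with
  | zero => intro v; simp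
  | succ p ih =>
    intro v
    rw [pow_succ, Module.End.mul_apply, pow_succ, Module.End.mul_apply, ← h, ih]

end BrennerAux

/-- Brenner's construction is fully faithful: with `FM = M^{n+2}` and
`FN = N^{n+2}` carrying the shift-type `X`- and `Y`-actions built from the structure
endomorphisms `xM i j, yM i j` of `M` and `xN i j, yN i j` of `N`, every `k⟨X,Y⟩`-module
homomorphism `α : FM → FN` (i.e. `k`-linear map commuting with the `X`- and `Y`-actions)
is the diagonal block matrix `diag(β, …, β)` of a unique `A`-module homomorphism
`β : M → N` (i.e. a `k`-linear map commuting with all the structure endomorphisms). -/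
theorem brenner_fully_faithful
    (k M N : Type) [Field k] [AddCommGroup M] [Module k M] [FiniteDimensional k M]
    [AddCommGroup N] [Module k N] [FiniteDimensional k N]
    (n : ℕ) (hn : 2 ≤ n)
    (xM yM : Fin (n + 2) → Fin (n + 2) → (M →ₗ[k] M))
    (xN yN : Fin (n + 2) → Fin (n + 2) → (N →ₗ[k] N))
    (hxMsub : ∀ i j : Fin (n + 2), (i : ℕ) = (j : ℕ) + 1 → xM i j = LinearMap.id)
    (hxMup : ∀ i j : Fin (n + 2), (i : ℕ) ≤ (j : ℕ) → xM i j = 0)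
    (hyMsup : ∀ i j : Fin (n + 2), (j : ℕ) = (i : ℕ) + 1 → yM i j = LinearMap.id)
    (hyMlow : ∀ i j : Fin (n + 2), (j : ℕ) ≤ (i : ℕ) → yM i j = 0)
    (hxNsub : ∀ i j : Fin (n + 2), (i : ℕ) = (j : ℕ) + 1 → xN i j = LinearMap.id)
    (hxNup : ∀ i j : Fin (n + 2), (i : ℕ) ≤ (j : ℕ) → xN i j = 0)
    (hyNsup : ∀ i j : Fin (n + 2), (j : ℕ) = (i : ℕ) + 1 → yN i j = LinearMap.id)
    (hyNlow : ∀ i j : Fin (n + 2), (j : ℕ) ≤ (i : ℕ) → yN i j = 0)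
    (α : (Fin (n + 2) → M) →ₗ[k] (Fin (n + 2) → N))
    (hαX : ∀ v,
        α ((LinearMap.pi fun i => ∑ j : Fin (n + 2), (xM i j) ∘ₗ LinearMap.proj j) v)
          = (LinearMap.pi fun i => ∑ j : Fin (n + 2), (xN i j) ∘ₗ LinearMap.proj j) (α v))
    (hαY : ∀ v,
        α ((LinearMap.pi fun i => ∑ j : Fin (n + 2), (yM i j) ∘ₗ LinearMap.proj j) v)
          = (LinearMap.pi fun i => ∑ j : Fin (n + 2), (yN i j) ∘ₗ LinearMap.proj j) (α v)) :
    ∃! β : M →ₗ[k] N,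
      (∀ i j : Fin (n + 2),
          β ∘ₗ xM i j = xN i j ∘ₗ β ∧ β ∘ₗ yM i j = yN i j ∘ₗ β) ∧
      ∀ (v : Fin (n + 2) → M) (i : Fin (n + 2)), α v i = β (v i) := by
  
  classical
  set XMo : (Fin (n+2) → M) →ₗ[k] (Fin (n+2) → M) :=
    LinearMap.pi fun i => ∑ j : Fin (n + 2), (xM i j) ∘ₗ LinearMap.proj j with hXMo
  set YMo : (Fin (n+2) → M) →ₗ[k] (Fin (n+2) → M) :=
    LinearMap.pi fun i => ∑ j : Fin (n + 2), (yM i j) ∘ₗ LinearMap.proj j with hYMo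
  set XNo : (Fin (n+2) → N) →ₗ[k] (Fin (n+2) → N) :=
    LinearMap.pi fun i => ∑ j : Fin (n + 2), (xN i j) ∘ₗ LinearMap.proj j with hXNo
  set YNo : (Fin (n+2) → N) →ₗ[k] (Fin (n+2) → N) :=
    LinearMap.pi fun i => ∑ j : Fin (n + 2), (yN i j) ∘ₗ LinearMap.proj j with hYNo
  have happXM : ∀ w i, XMo w i = ∑ j, xM i j (w j) := by
    intro w i; rw [hXMo]; simp [LinearMap.pi_apply, LinearMap.sum_apply]
  have happYM : ∀ w i, YMo w i = ∑ j, yM i j (w j) := by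
    intro w i; rw [hYMo]; simp [LinearMap.pi_apply, LinearMap.sum_apply]
  have happXN : ∀ w i, XNo w i = ∑ j, xN i j (w j) := by
    intro w i; rw [hXNo]; simp [LinearMap.pi_apply, LinearMap.sum_apply]
  have happYN : ∀ w i, YNo w i = ∑ j, yN i j (w j) := by
    intro w i; rw [hYNo]; simp [LinearMap.pi_apply, LinearMap.sum_apply]
  -- Step 1 : α maps `Pi.single j m` to a vector supported at `j`.
  have hsupp : ∀ (j : Fin (n+2)) (m : M) (i : Fin (n+2)), i ≠ j → α (Pi.single j m) i = 0 := by
    intro j m i hne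
    rcases lt_trichotomy (i : ℕ) (j : ℕ) with h | h | h
    · have h1 : (XMo ^ (n + 2 - (j : ℕ))) (Pi.single j m) = 0 := by
        funext l
        refine brenner_aux_easy_x xM hxMup XMo happXM (n + 2 - (j : ℕ)) (j : ℕ)
          (Pi.single j m) ?_ l (by omega)
        intro i' hi'
        have hne2 : i' ≠ j := Fin.ne_of_val_ne (by omega)
        exact Pi.single_eq_of_ne (M := fun _ : Fin (n+2) => M) hne2 m
      have h2 : (XNo ^ (n + 2 - (j : ℕ))) (α (Pi.single j m)) = 0 := by
        rw [← brenner_aux_pow_comm α XMo XNo hαX, h1, map_zero]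
      exact brenner_aux_hard_x xN hxNsub hxNup XNo happXN _ _ h2 i (by omega)
    · exact absurd (Fin.ext h) hne
    · have h1 : (YMo ^ ((j : ℕ) + 1)) (Pi.single j m) = 0 := by
        funext l
        refine brenner_aux_easy_y yM hyMlow YMo happYM ((j : ℕ) + 1) ((j : ℕ) + 1)
          (Pi.single j m) ?_ l (by omega)
        intro i' hi'
        have hne2 : i' ≠ j := Fin.ne_of_val_ne (by omega)
        exact Pi.single_eq_of_ne (M := fun _ : Fin (n+2) => M) hne2 m
      have h2 : (YNo ^ ((j : ℕ) + 1)) (α (Pi.single j m)) = 0 := by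
        rw [← brenner_aux_pow_comm α YMo YNo hαY, h1, map_zero]
      exact brenner_aux_hard_y yN hyNsup hyNlow YNo happYN _ _ h2 i (by omega)
  -- Step 2 : the diagonal components of α
  set βf : Fin (n+2) → (M →ₗ[k] N) :=
    fun j => (LinearMap.proj j) ∘ₗ (α ∘ₗ LinearMap.single k (fun _ : Fin (n+2) => M) j)
    with hβfdef
  have hβf : ∀ j m, βf j m = α (Pi.single j m) j := fun j m => rfl
  -- Step 3 : α is diagonal
  have hdiag : ∀ (v : Fin (n+2) → M) (i : Fin (n+2)), α v i = βf i (v i) := by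
    intro v i
    have hv : v = ∑ j, Pi.single j (v j) := (Finset.univ_sum_single v).symm
    conv_lhs => rw [hv]
    rw [map_sum, Finset.sum_apply, Finset.sum_eq_single i]
    · exact (hβf i (v i)).symm
    · intro j _ hj; exact hsupp j (v j) i (Ne.symm hj)
    · intro h; exact absurd (Finset.mem_univ i) h
  -- Step 4 : commutation relations for the components
  have hXrel : ∀ (i j : Fin (n+2)) (m : M), βf i (xM i j m) = xN i j (βf j m) := by
    intro i j m
    have h := congrFun (hαX (Pi.single j m)) i
    have hXM1 : XMo (Pi.single j m) = fun l => xM l j m := by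
      funext l
      rw [happXM, Finset.sum_eq_single j]
      · rw [Pi.single_eq_same]
      · intro b _ hb; rw [Pi.single_eq_of_ne hb, map_zero]
      · intro hmem; exact absurd (Finset.mem_univ j) hmem
    have hR : XNo (α (Pi.single j m)) i = xN i j (βf j m) := by
      rw [happXN, Finset.sum_eq_single j]
      · rw [hdiag, Pi.single_eq_same]
      · intro b _ hb; rw [hsupp j m b hb, map_zero]
      · intro hmem; exact absurd (Finset.mem_univ j) hmem
    rw [hXM1, hR, hdiag] at h
    exact h
  have hYrel : ∀ (i j : Fin (n+2)) (m : M), βf i (yM i j m) = yN i j (βf j m) := by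
    intro i j m
    have h := congrFun (hαY (Pi.single j m)) i
    have hYM1 : YMo (Pi.single j m) = fun l => yM l j m := by
      funext l
      rw [happYM, Finset.sum_eq_single j]
      · rw [Pi.single_eq_same]
      · intro b _ hb; rw [Pi.single_eq_of_ne hb, map_zero]
      · intro hmem; exact absurd (Finset.mem_univ j) hmem
    have hR : YNo (α (Pi.single j m)) i = yN i j (βf j m) := by
      rw [happYN, Finset.sum_eq_single j]
      · rw [hdiag, Pi.single_eq_same]
      · intro b _ hb; rw [hsupp j m b hb, map_zero]
      · intro hmem; exact absurd (Finset.mem_univ j) hmem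
    rw [hYM1, hR, hdiag] at h
    exact h
  -- Step 5 : all diagonal components agree
  have hstep : ∀ (j : Fin (n+2)) (hj : (j : ℕ) + 1 < n + 2),
      βf ⟨(j : ℕ) + 1, hj⟩ = βf j := by
    intro j hj
    ext m
    have h := hXrel ⟨(j : ℕ) + 1, hj⟩ j m
    rw [hxMsub _ j rfl, hxNsub _ j rfl] at h
    simpa using h
  have hconst : ∀ j : Fin (n+2), βf j = βf 0 := by
    have H : ∀ (d : ℕ) (hd : d < n + 2), βf ⟨d, hd⟩ = βf 0 := by
      intro d
      induction d with
      | zero =>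
        intro hd
        have : (⟨0, hd⟩ : Fin (n+2)) = 0 := Fin.ext (by simp)
        rw [this]
      | succ d ihd =>
        intro hd
        have hd' : d < n + 2 := by omega
        have := hstep ⟨d, hd'⟩ hd
        rw [this, ihd hd']
    intro j
    exact H (j : ℕ) j.isLt
  -- Conclusion
  refine ⟨βf 0, ⟨?_, ?_⟩, ?_⟩
  · intro i j
    constructor
    · ext m
      simp only [LinearMap.comp_apply]
      have h := hXrel i j m
      rw [hconst i, hconst j] at h
      exact h
    · ext m
      simp only [LinearMap.comp_apply]
      have h := hYrel i j m
      rw [hconst i, hconst j] at h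
      exact h
  · intro v i
    rw [hdiag, hconst i]
  · intro β' hβ'
    ext m
    have h := hβ'.2 (Pi.single 0 m) 0
    rw [Pi.single_eq_same] at h
    rw [← h]
    exact (hβf 0 m).symm
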